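/- Let R > 0 and m₁ = m₂ = m > 0. If z₁ = α and z₂ = λα are nonzero real numbers with α ≠ λα and R² + λα² ≠ 0, and they satisfy the two-body relative-equilibrium system 32R⁶(|z_k|²−R²)z_k/(R²+|z_k|²)⁴ = m(|z_j|²+R²)²(R²+z̄_j z_k)(z_j−z_k)/(|z_j−z_k|³|R²+z̄_j z_k|³) for {k,j}={1,2}, then λ satisfies (R²−α²)(R²+λ²α²)² + λ(R²−λ²α²)(R²+α²)² = 0. -/

import Mathlib

open Complex

theorem two_body_equal_mass_condition (R m α lam : ℝ) (hR : 0 < R) (hm : 0 < m)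
    (hα : α ≠ 0) (hz : lam * α ≠ 0) (hne : α ≠ lam * α) (hconj : R ^ 2 + lam * α ^ 2 ≠ 0)
    (h1 :
      (32 * (R : ℂ) ^ 6 * ((‖((α : ℂ))‖ ^ 2 - R ^ 2 : ℝ) : ℂ) * (α : ℂ)) /
          (((R ^ 2 + ‖((α : ℂ))‖ ^ 2 : ℝ) : ℂ)) ^ 4 =
        (m : ℂ) * ((‖((lam * α : ℝ) : ℂ)‖ ^ 2 + R ^ 2 : ℝ) : ℂ) ^ 2 *
            ((R : ℂ) ^ 2 + (starRingEnd ℂ) ((lam * α : ℝ) : ℂ) * (α : ℂ)) *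
            (((lam * α : ℝ) : ℂ) - (α : ℂ)) /
          (((‖(((lam * α : ℝ) : ℂ) - (α : ℂ))‖ ^ 3 *
              ‖((R : ℂ) ^ 2 + (starRingEnd ℂ) ((lam * α : ℝ) : ℂ) * (α : ℂ))‖ ^ 3 :
              ℝ) : ℂ)))
    (h2 :
      (32 * (R : ℂ) ^ 6 * ((‖(((lam * α : ℝ) : ℂ))‖ ^ 2 - R ^ 2 : ℝ) : ℂ) *
            ((lam * α : ℝ) : ℂ)) /
          (((R ^ 2 + ‖(((lam * α : ℝ) : ℂ))‖ ^ 2 : ℝ) : ℂ)) ^ 4 =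
        (m : ℂ) * ((‖((α : ℂ))‖ ^ 2 + R ^ 2 : ℝ) : ℂ) ^ 2 *
            ((R : ℂ) ^ 2 + (starRingEnd ℂ) ((α : ℂ)) * ((lam * α : ℝ) : ℂ)) *
            ((α : ℂ) - ((lam * α : ℝ) : ℂ)) /
          (((‖((α : ℂ) - ((lam * α : ℝ) : ℂ))‖ ^ 3 *
              ‖((R : ℂ) ^ 2 + (starRingEnd ℂ) ((α : ℂ)) * ((lam * α : ℝ) : ℂ))‖ ^ 3 :
              ℝ) : ℂ))) :
    (R ^ 2 - α ^ 2) * (R ^ 2 + lam ^ 2 * α ^ 2) ^ 2 +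
      lam * (R ^ 2 - lam ^ 2 * α ^ 2) * (R ^ 2 + α ^ 2) ^ 2 = 0 := by
  simp only [Complex.conj_ofReal, ← Complex.ofReal_pow, ← Complex.ofReal_mul, ← Complex.ofReal_sub, ← Complex.ofReal_add, ← Complex.ofReal_ofNat, Complex.norm_real, Real.norm_eq_abs, ← Complex.ofReal_div, Complex.ofReal_inj] at h1 h2
  simp only [_root_.sq_abs] at h1 h2
  rw [abs_sub_comm α (lam*α), show R^2+α*(lam*α) = R^2+lam*α*α from by ring] at h2
  have hd1 : lam*α - α ≠ 0 := sub_ne_zero.mpr (Ne.symm hne)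
  have hc' : R^2 + lam*α*α ≠ 0 := by rw [show lam*α*α = lam*α^2 from by ring]; exact hconj
  have hP : (R^2+α^2) ≠ 0 := by positivity
  have hQ : (R^2+(lam*α)^2) ≠ 0 := by positivity
  have ha1 : |lam*α - α| ≠ 0 := abs_ne_zero.mpr hd1
  have ha2 : |R^2+lam*α*α| ≠ 0 := abs_ne_zero.mpr hc'
  rw [div_eq_div_iff (by positivity) (mul_ne_zero (pow_ne_zero _ ha1) (pow_ne_zero _ ha2))] at h1 h2
  have key : 32*R^6*(|lam*α-α|^3*|R^2+lam*α*α|^3) * (α * ((R^2-α^2)*(R^2+lam^2*α^2)^2 + lam*(R^2-lam^2*α^2)*(R^2+α^2)^2)) = 0 := by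
    linear_combination (-(R^2+(lam*α)^2)^2) * h1 + (-(R^2+α^2)^2) * h2
  have hD : |lam*α-α|^3*|R^2+lam*α*α|^3 ≠ 0 := mul_ne_zero (pow_ne_zero _ ha1) (pow_ne_zero _ ha2)
  have h32 : (32*R^6:ℝ) ≠ 0 := by positivity
  have key2 := (mul_eq_zero.mp (by linear_combination key : (32*R^6*(|lam*α-α|^3*|R^2+lam*α*α|^3)) * (α * ((R^2-α^2)*(R^2+lam^2*α^2)^2 + lam*(R^2-lam^2*α^2)*(R^2+α^2)^2)) = 0)).resolve_left (mul_ne_zero h32 hD)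
  exact (mul_eq_zero.mp key2).resolve_left hα
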